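/- Under hypotheses W1, CP1, H2, H3, H4 (with s + r·M·t < 1), the attractor is contained in the support of the invariant measure: A ⊆ supp(μ). Combined with the reverse inclusion, supp(μ) = A. -/

import Mathlib

open MeasureTheory Metric Filter

/-- The Monge–Kantorovich (Wasserstein-1) distance. -/
noncomputable def dMK {α : Type*} [MetricSpace α] [MeasurableSpace α]
    (μ ν : Measure α) : ℝ :=
  ⨆ f : {f : α → ℝ // LipschitzWith 1 f}, (∫ z, f.1 z ∂μ - ∫ z, f.1 z ∂ν)

/-- The Markov operator of an IFSm. -/
noncomputable def markovOp {X Λ : Type*} [MeasurableSpace X] [MeasurableSpace Λ]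
    (τ : Λ → X → X) (q : X → Measure Λ) : Measure X → Measure X :=
  fun μ => μ.bind fun x => (q x).map fun l => τ l x

/-- The composition `τ_{λ_{k-1}} ∘ ⋯ ∘ τ_{λ_0}` associated with a word `λ^k ∈ Λ^k`. -/
def compIFS {X Λ : Type*} (τ : Λ → X → X) : (k : ℕ) → (Fin k → Λ) → X → X
  | 0, _, x => x
  | (k + 1), lam, x => compIFS τ k (fun i => lam i.succ) (τ (lam 0) x)

/-- The (topological) support of a measure: the set of points all of whose open
neighbourhoods have positive measure. -/
def measureSupport {α : Type*} [TopologicalSpace α] [MeasurableSpace α]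
    (μ : Measure α) : Set α :=
  {x | ∀ U : Set α, IsOpen U → x ∈ U → 0 < μ U}

/-- Under W1, CP1, H2, H3, H4 (with `s + r·M·t < 1`), the support of the unique invariant
measure `μ` contains the attractor `A`; combined with the reverse inclusion, `supp(μ) = A`. -/
theorem attractor_subset_support
    {X Λ : Type*} [MetricSpace X] [CompactSpace X] [MeasurableSpace X] [BorelSpace X]
    [MetricSpace Λ] [CompactSpace Λ] [MeasurableSpace Λ] [BorelSpace Λ]
    (τ : Λ → X → X) (hτ : Continuous fun p : Λ × X => τ p.1 p.2)
    (q : X → Measure Λ) (hq_prob : ∀ x, IsProbabilityMeasure (q x))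
    (hq_meas : Measurable fun x => (q x).map fun l => τ l x)
    (hq_cont : ∀ g : Λ → ℝ, Continuous g → Continuous fun x => ∫ l, g l ∂(q x))
    (M : ℕ) (hM : 1 ≤ M) (s r t : ℝ) (hs0 : 0 < s) (hs1 : s < 1) (hr : 0 ≤ r) (ht : 0 ≤ t)
    (hcontr : s + r * (M : ℝ) * t < 1)
    (hW1 : ∀ (lam : Λ) (x y : X), dist (τ lam x) (τ lam y) ≤ dist x y)
    (hCP1 : ∀ (lams : Fin M → Λ) (x y : X),
      dist (compIFS τ M lams x) (compIFS τ M lams y) ≤ s * dist x y)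
    (hH2 : ∀ (x : X) (l₁ l₂ : Λ), dist (τ l₁ x) (τ l₂ x) ≤ r * dist l₁ l₂)
    (hH3 : ∀ x y : X, dMK (q x) (q y) ≤ t * dist x y)
    (hH4 : ∀ (x : X) (U : Set Λ), IsOpen U → U.Nonempty → 0 < q x U)
    (A : Set X) (hA : IsCompact A) (hAne : A.Nonempty)
    (hAfix : (⋃ lam : Λ, τ lam '' A) = A)
    (hAattr : ∀ B : Set X, IsCompact B → B.Nonempty →
      Tendsto (fun k => hausdorffDist ((fun C => ⋃ lam : Λ, τ lam '' C)^[k] B) A)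
        atTop (nhds 0))
    (μ : Measure X) (hμ : IsProbabilityMeasure μ) (hμinv : markovOp τ q μ = μ) :
    A ⊆ measureSupport μ ∧ measureSupport μ = A := by
  set S := measureSupport μ with hSdef
  -- S is closed
  have hScl : IsClosed S := by
    rw [← isOpen_compl_iff]
    rw [isOpen_iff_forall_mem_open]
    intro x hx
    simp only [hSdef, measureSupport, Set.mem_compl_iff, Set.mem_setOf_eq, not_forall] at hx
    obtain ⟨U, hUo, hxU, hU0⟩ := hx
    refine ⟨U, fun u hu => ?_, hUo, hxU⟩
    simp only [hSdef, measureSupport, Set.mem_compl_iff, Set.mem_setOf_eq, not_forall]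
    exact ⟨U, hUo, hu, hU0⟩
  -- S has full measure
  have hSconull : μ Sᶜ = 0 := by
    have hrepr : Sᶜ = ⋃₀ {U : Set X | IsOpen U ∧ μ U = 0} := by
      ext x
      simp only [hSdef, measureSupport, Set.mem_compl_iff, Set.mem_setOf_eq, not_forall,
        Set.mem_sUnion]
      constructor
      · rintro ⟨U, hUo, hxU, hU0⟩
        exact ⟨U, ⟨hUo, by simpa using hU0⟩, hxU⟩
      · rintro ⟨U, ⟨hUo, hU0⟩, hxU⟩
        exact ⟨U, hUo, hxU, by simp [hU0]⟩
    obtain ⟨T, hTc, hTsub, hTeq⟩ :=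
      TopologicalSpace.isOpen_sUnion_countable {U : Set X | IsOpen U ∧ μ U = 0}
        (fun U hU => hU.1)
    rw [hrepr, ← hTeq, Set.sUnion_eq_biUnion, measure_biUnion_null_iff hTc]
    exact fun U hU => (hTsub hU).2
  have hSae : ∀ᵐ x ∂μ, x ∈ S := by
    rw [MeasureTheory.ae_iff]
    exact hSconull
  -- S is nonempty
  have hSne : S.Nonempty := by
    by_contra h
    rw [Set.not_nonempty_iff_eq_empty] at h
    have : μ Set.univ = 0 := by
      rw [← Set.compl_empty, ← h]; exact hSconull
    simp [hμ.measure_univ] at this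
  have hSc : IsCompact S := hScl.isCompact
  -- measurability of the fibers
  have hτx : ∀ x : X, Measurable fun l => τ l x := fun x =>
    (hτ.comp (continuous_id.prodMk continuous_const)).measurable
  -- the key fixed-point property of the Hutchinson operator on S
  have key : (⋃ lam : Λ, τ lam '' S) = S := by
    apply Set.Subset.antisymm
    · -- τ lam x ∈ S for x ∈ S
      rintro y hy
      simp only [Set.mem_iUnion, Set.mem_image] at hy
      obtain ⟨lam, x, hxS, rfl⟩ := hy
      intro U hUo hmem
      obtain ⟨V, W, hVo, hWo, hlamV, hxW, hVW⟩ :=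
        (isOpen_prod_iff.mp (hUo.preimage hτ)) lam x hmem
      have hb : μ U = ∫⁻ x', ((q x').map fun l => τ l x') U ∂μ := by
        conv_lhs => rw [← hμinv]
        exact Measure.bind_apply hUo.measurableSet hq_meas.aemeasurable
      rw [hb]
      set f : X → ENNReal := fun x' => ((q x').map fun l => τ l x') U with hf
      have hfm : Measurable f := (Measure.measurable_coe hUo.measurableSet).comp hq_meas
      rw [lintegral_pos_iff_support hfm]
      have hWsub : W ⊆ Function.support f := by
        intro x' hx'
        have hfx' : 0 < f x' := by
          rw [hf]
          simp only
          rw [Measure.map_apply (hτx x') hUo.measurableSet]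
          refine lt_of_lt_of_le (hH4 x' V hVo ⟨lam, hlamV⟩) (measure_mono ?_)
          intro l hl
          exact hVW (Set.mk_mem_prod hl hx')
        exact fun h0 => by simp [h0] at hfx'
      exact lt_of_lt_of_le (hxS W hWo hxW) (measure_mono hWsub)
    · -- every point of S is in the image
      intro y hyS
      by_contra hy
      have hFScomp : IsCompact (⋃ lam : Λ, τ lam '' S) := by
        have : (⋃ lam : Λ, τ lam '' S) = (fun p : Λ × X => τ p.1 p.2) '' (Set.univ ×ˢ S) := by
          ext z
          simp only [Set.mem_iUnion, Set.mem_image, Set.mem_prod, Set.mem_univ, true_and,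
            Prod.exists]
        rw [this]
        exact (isCompact_univ.prod hSc).image hτ
      have hFScl : IsClosed (⋃ lam : Λ, τ lam '' S) := hFScomp.isClosed
      obtain ⟨ε, hε, hball⟩ := Metric.isOpen_iff.mp hFScl.isOpen_compl y hy
      have hb : μ (Metric.ball y ε) = ∫⁻ x', ((q x').map fun l => τ l x') (Metric.ball y ε) ∂μ := by
        conv_lhs => rw [← hμinv]
        exact Measure.bind_apply Metric.isOpen_ball.measurableSet hq_meas.aemeasurable
      have hzero : μ (Metric.ball y ε) = 0 := by
        rw [hb]
        have : ∀ᵐ x' ∂μ, ((q x').map fun l => τ l x') (Metric.ball y ε) = 0 := by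
          filter_upwards [hSae] with x' hx'
          rw [Measure.map_apply (hτx x') Metric.isOpen_ball.measurableSet]
          have : ((fun l => τ l x') ⁻¹' Metric.ball y ε) = ∅ := by
            ext l
            simp only [Set.mem_preimage, Set.mem_empty_iff_false, iff_false]
            intro hl
            exact hball hl (Set.mem_iUnion.mpr ⟨l, ⟨x', hx', rfl⟩⟩)
          simp [this]
        rw [lintegral_congr_ae this]
        simp
      exact absurd (hyS (Metric.ball y ε) Metric.isOpen_ball (Metric.mem_ball_self hε))
        (by simp [hzero])
  -- iterate the Hutchinson operator: S is fixed
  have hiter : ∀ k, (fun C => ⋃ lam : Λ, τ lam '' C)^[k] S = S :=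
    fun k => Function.iterate_fixed key k
  have htend := hAattr S hSc hSne
  simp only [hiter] at htend
  have hdist0 : hausdorffDist S A = 0 :=
    tendsto_nhds_unique tendsto_const_nhds htend
  have hedne : EMetric.hausdorffEdist S A ≠ ⊤ :=
    Metric.hausdorffEdist_ne_top_of_nonempty_of_bounded hSne hAne hSc.isBounded hA.isBounded
  have hSA : S = A := (hScl.hausdorffDist_zero_iff_eq hA.isClosed hedne).mp hdist0
  exact ⟨hSA.symm.subset, hSA⟩
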